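/- For any biconed graph G^{A,B} there is a bijection between the set of spanning trees of G^{A,B} and the set of birooted forests of G^{A,B}_red. -/

import Mathlib

/-!
Formalization scaffold for "h-vectors of graphic matroids of biconed graphs".

A graph `G` (loops and parallel edges allowed) with vertex set `A ∪ B` is
modelled by an abstract finite edge type `E` with an endpoint map
`ends : E → Sym2 (Fin m ⊕ₗ Fin n)`, where `A = Fin m = {1,…,m}`,
`Ā = B \ A = Fin n = {1̄,…,n̄}` and the finset `S ⊆ Fin m` records `A ∩ B`
(so `B = S ∪ Ā`).  The biconing `G^{A,B}` adds the two vertices `0` and `0̄`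
and the edges `00̄`, `0a (a ∈ A)` and `0̄b (b ∈ B)`.
-/

namespace BiconedPaper

noncomputable section
open scoped Classical

/-! ### Walks in multigraphs presented by an endpoint map -/

/-- A walk in the multigraph with edge set `ε` and endpoint map `ends`. -/
inductive MWalk {ε ν : Type} (ends : ε → Sym2 ν) : ν → ν → Type
  | nil (u : ν) : MWalk ends u u
  | cons {u w : ν} (e : ε) (v : ν) (h : ends e = s(u, v)) (p : MWalk ends v w) :
      MWalk ends u w

namespace MWalk

variable {ε ν : Type} {ends : ε → Sym2 ν}

/-- The list of edges traversed by a walk. -/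
def edges : ∀ {u v : ν}, MWalk ends u v → List ε
  | _, _, nil _ => []
  | _, _, cons e _ _ p => e :: p.edges

/-- The list of vertices visited by a walk. -/
def support : ∀ {u v : ν}, MWalk ends u v → List ν
  | u, _, nil _ => [u]
  | u, _, cons _ _ _ p => u :: p.support

/-- A walk is a path if it visits no vertex twice. -/
def IsPath {u v : ν} (p : MWalk ends u v) : Prop := p.support.Nodup

/-- All edges of the walk belong to the edge set `F`. -/
def edgesIn {u v : ν} (p : MWalk ends u v) (F : Finset ε) : Prop :=
  ∀ e ∈ p.edges, e ∈ F

/-- The number of "bridging" edges traversed by a walk, i.e. steps whose two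
endpoints lie on different sides according to `sideF`. -/
def bridgeCount (sideF : ν → Bool) : ∀ {u v : ν}, MWalk ends u v → ℕ
  | _, _, nil _ => 0
  | u, _, cons _ v' _ p => (if sideF u = sideF v' then 0 else 1) + p.bridgeCount sideF

end MWalk

/-- `u` and `v` are joined by a walk all of whose edges lie in `F`. -/
def Reachable {ε ν : Type} (ends : ε → Sym2 ν) (F : Finset ε) (u v : ν) : Prop :=
  ∃ p : MWalk ends u v, p.edgesIn F

/-- An edge set is acyclic (a forest) iff removing any one of its edges
disconnects the endpoints of that edge.  (In particular no loops and no
parallel pairs.) -/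
def IsAcyclic {ε ν : Type} [DecidableEq ε] (ends : ε → Sym2 ν) (F : Finset ε) : Prop :=
  ∀ e ∈ F, ∀ u v : ν, ends e = s(u, v) → ¬ Reachable ends (F.erase e) u v

/-- A spanning tree: an acyclic edge set connecting every pair of vertices. -/
def IsSpanningTree {ε ν : Type} [DecidableEq ε] (ends : ε → Sym2 ν) (T : Finset ε) : Prop :=
  IsAcyclic ends T ∧ ∀ u v : ν, Reachable ends T u v

/-! ### Biconed graphs -/

/-- The data of a biconed graph `G^{A,B}`:  the graph `G` has vertex set
`A ∪ B` with `A = Fin m`, `Ā = B \ A = Fin n`, `A ∩ B = S`, and abstract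
edge set `E` (so loops and parallel edges are allowed). -/
structure BiconedGraph where
  m : ℕ
  n : ℕ
  E : Type
  fintypeE : Fintype E
  decEqE : DecidableEq E
  ends : E → Sym2 (Fin m ⊕ₗ Fin n)
  S : Finset (Fin m)

namespace BiconedGraph

variable (P : BiconedGraph)

instance : Fintype P.E := P.fintypeE
instance : DecidableEq P.E := P.decEqE

/-- The vertices of `G`, linearly ordered `1 < ⋯ < m < 1̄ < ⋯ < n̄`. -/
abbrev VG := Fin P.m ⊕ₗ Fin P.n

/-- The vertices of `G^{A,B}_red`:  `⊥` is the vertex `0̄`, ordered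
`0̄ < 1 < ⋯ < m < 1̄ < ⋯ < n̄`. -/
abbrev Vred := WithBot P.VG

/-- The vertices of `G^{A,B}`: `⊥` is `0`, ordered `0 < 0̄ < 1 < ⋯ < n̄`. -/
abbrev W := WithBot P.Vred

/-- The vertex `a ∈ A`. -/
def aVert (a : Fin P.m) : P.VG := toLex (Sum.inl a)
/-- The vertex `b ∈ Ā`. -/
def bVert (b : Fin P.n) : P.VG := toLex (Sum.inr b)
/-- Inclusion of the vertices of `G` into those of `G^{A,B}_red`. -/
def liftV (x : P.VG) : P.Vred := (x : WithBot P.VG)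
/-- Inclusion of the vertices of `G^{A,B}_red` into those of `G^{A,B}`. -/
def liftW (x : P.Vred) : P.W := (x : WithBot P.Vred)

/-- The edges of the biconed graph `G^{A,B}`:  the edge `00̄`, the coning
edges `0a (a ∈ A)`, `0̄b (b ∈ Ā)`, `0̄a (a ∈ A ∩ B)`, and the edges of `G`. -/
abbrev EB := Unit ⊕ (Fin P.m ⊕ (Fin P.n ⊕ ({a : Fin P.m // a ∈ P.S} ⊕ P.E)))

/-- The edge `00̄`. -/
abbrev e00 : P.EB := Sum.inl ()
/-- The coning edge `0a`, `a ∈ A`. -/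
abbrev eA (a : Fin P.m) : P.EB := Sum.inr (Sum.inl a)
/-- The coning edge `0̄b`, `b ∈ Ā`. -/
abbrev eB (b : Fin P.n) : P.EB := Sum.inr (Sum.inr (Sum.inl b))
/-- The coning edge `0̄a`, `a ∈ A ∩ B`. -/
abbrev eS (a : {a : Fin P.m // a ∈ P.S}) : P.EB := Sum.inr (Sum.inr (Sum.inr (Sum.inl a)))
/-- An original edge of `G`. -/
abbrev eG (e : P.E) : P.EB := Sum.inr (Sum.inr (Sum.inr (Sum.inr e)))

/-- The endpoint map of `G^{A,B}`. -/
def endsB : P.EB → Sym2 P.W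
  | Sum.inl _ => s((⊥ : P.W), P.liftW ⊥)
  | Sum.inr (Sum.inl a) => s((⊥ : P.W), P.liftW (P.liftV (P.aVert a)))
  | Sum.inr (Sum.inr (Sum.inl b)) => s(P.liftW ⊥, P.liftW (P.liftV (P.bVert b)))
  | Sum.inr (Sum.inr (Sum.inr (Sum.inl a))) => s(P.liftW ⊥, P.liftW (P.liftV (P.aVert a.1)))
  | Sum.inr (Sum.inr (Sum.inr (Sum.inr e))) => (P.ends e).map fun x => P.liftW (P.liftV x)

/-- The spanning tree `T₀`, consisting of `00̄`, the edges `0a (a ∈ A)` and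
the edges `0̄b (b ∈ Ā)`. -/
def T0 : Finset P.EB :=
  Finset.univ.filter fun e => match e with
    | Sum.inl _ => True
    | Sum.inr (Sum.inl _) => True
    | Sum.inr (Sum.inr (Sum.inl _)) => True
    | _ => False

/-- The edges of `G^{A,B}_red` (delete the edges of `T₀` and the vertex `0`):
the edges `0̄a (a ∈ A ∩ B)` together with the edges of `G`. -/
abbrev Ered := {a : Fin P.m // a ∈ P.S} ⊕ P.E

/-- The endpoint map of `G^{A,B}_red`; `⊥` is the vertex `0̄`. -/
def endsRed : P.Ered → Sym2 P.Vred
  | Sum.inl a => s((⊥ : P.Vred), P.liftV (P.aVert a.1))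
  | Sum.inr e => (P.ends e).map P.liftV

/-- Inclusion of the edges of `G^{A,B}_red` into those of `G^{A,B}`. -/
def redToEB : P.Ered → P.EB
  | Sum.inl a => P.eS a
  | Sum.inr e => P.eG e

/-- The edge set `T \ T₀` of `T`, viewed inside `G^{A,B}_red`. -/
def redOf (T : Finset P.EB) : Finset P.Ered :=
  Finset.univ.filter fun e => P.redToEB e ∈ T

/-- `true` on the vertices of `A`, `false` on the vertices of `Ā ∪ {0̄}`. -/
def side : P.Vred → Bool :=
  WithBot.recBotCoe false fun x => Sum.elim (fun _ => true) (fun _ => false) (ofLex x)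

/-- The vertex lies in `A`. -/
def InA (v : P.Vred) : Prop := ∃ a : Fin P.m, v = P.liftV (P.aVert a)

/-- An edge of `G^{A,B}_red` is bridging if it joins a vertex of `A` to a
vertex of `Ā ∪ {0̄}`. -/
def BridgingE (e : P.Ered) : Prop :=
  ∃ u v : P.Vred, P.endsRed e = s(u, v) ∧ P.side u ≠ P.side v

/-! ### 2-edge-rooted forests -/

/-- The underlying edge set `F` of the multiset of edges given by the
multiplicity function `mult` (an edge `e` carries `mult e - 1` edge roots). -/
def mSupport (mult : P.Ered → ℕ) : Finset P.Ered :=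
  Finset.univ.filter fun e => mult e ≠ 0

/-- The degree of the multiset of edges given by `mult`. -/
def deg (mult : P.Ered → ℕ) : ℕ := ∑ e : P.Ered, mult e

/-- Edge `e` meets the connected component of `v` in the edge set `F`. -/
def Touches (F : Finset P.Ered) (v : P.Vred) (e : P.Ered) : Prop :=
  ∃ u : P.Vred, u ∈ P.endsRed e ∧ Reachable P.endsRed F v u

/-- The total number of edge roots in the component of `v`. -/
def compEdgeRoots (mult : P.Ered → ℕ) (v : P.Vred) : ℕ :=
  ∑ e ∈ P.mSupport mult, if P.Touches (P.mSupport mult) v e then mult e - 1 else 0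

/-- The component of `v` is `compCount`-edge-rooted:  the number of its edge
roots, plus `1` if it contains the vertex `0̄`. -/
def compCount (mult : P.Ered → ℕ) (v : P.Vred) : ℕ :=
  P.compEdgeRoots mult v +
    if Reachable P.endsRed (P.mSupport mult) v (⊥ : P.Vred) then 1 else 0

/-- Condition (C3) for the `2`-edge-rooted component of `v`:  the unique
shortest path containing both edge roots (resp. the vertex `0̄` and the edge
root, if the component contains `0̄`) has an odd number of bridging edges.
The shortest path containing two edges is the unique path whose first and
last edges are the two rooted edges; if the two edge roots lie on one common
edge (`mult e = 3`) the path is that single edge. -/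
def C3At (mult : P.Ered → ℕ) (v : P.Vred) : Prop :=
  (Reachable P.endsRed (P.mSupport mult) v (⊥ : P.Vred) →
    ∃ (x : P.Vred) (p : MWalk P.endsRed (⊥ : P.Vred) x),
      p.IsPath ∧ p.edgesIn (P.mSupport mult) ∧
      (∃ e, p.edges.getLast? = some e ∧ 2 ≤ mult e) ∧
      Odd (p.bridgeCount P.side)) ∧
  (¬ Reachable P.endsRed (P.mSupport mult) v (⊥ : P.Vred) →
    ∃ (x y : P.Vred) (p : MWalk P.endsRed x y),
      p.IsPath ∧ p.edgesIn (P.mSupport mult) ∧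
      Reachable P.endsRed (P.mSupport mult) v x ∧
      (∃ e, p.edges.head? = some e ∧ 2 ≤ mult e) ∧
      (∃ e, p.edges.getLast? = some e ∧ 2 ≤ mult e) ∧
      (∀ e, p.edges = [e] → mult e = 3) ∧
      Odd (p.bridgeCount P.side))

/-- `mult : Ered → ℕ` is (the multiplicity function of) a 2-edge-rooted
forest of `G^{A,B}_red`:
(C0) its support is a spanning forest;
(C1) at most one component is `2`-edge-rooted;
(C2) every other component is `0`- or `1`-edge-rooted;
(C3) the parity condition on the path joining the two roots. -/
def Is2ERF (mult : P.Ered → ℕ) : Prop :=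
  IsAcyclic P.endsRed (P.mSupport mult) ∧
  (∀ v : P.Vred, P.compCount mult v ≤ 2) ∧
  (∀ u v : P.Vred, P.compCount mult u = 2 → P.compCount mult v = 2 →
    Reachable P.endsRed (P.mSupport mult) u v) ∧
  (∀ v : P.Vred, P.compCount mult v = 2 → P.C3At mult v)

/-! ### Birooted forests -/

/-- `(F, R)` is a birooted forest of `G^{A,B}_red`:  `F` is a spanning forest,
the root set `R` contains `0̄`, every component of `F` contains at least one
root, no component contains three roots, at most one component contains two
roots, and a component with two roots has one root in `A` and the other in
`Ā ∪ {0̄}`. -/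
def IsBirootedForest (F : Finset P.Ered) (R : Set P.Vred) : Prop :=
  IsAcyclic P.endsRed F ∧
  (⊥ : P.Vred) ∈ R ∧
  (∀ v : P.Vred, ∃ r ∈ R, Reachable P.endsRed F v r) ∧
  (∀ r₁ ∈ R, ∀ r₂ ∈ R, ∀ r₃ ∈ R, r₁ ≠ r₂ → r₁ ≠ r₃ → r₂ ≠ r₃ →
    Reachable P.endsRed F r₁ r₂ → Reachable P.endsRed F r₁ r₃ → False) ∧
  (∀ r₁ ∈ R, ∀ r₂ ∈ R, ∀ r₃ ∈ R, ∀ r₄ ∈ R, r₁ ≠ r₂ → r₃ ≠ r₄ →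
    Reachable P.endsRed F r₁ r₂ → Reachable P.endsRed F r₃ r₄ →
    Reachable P.endsRed F r₁ r₃) ∧
  (∀ r₁ ∈ R, ∀ r₂ ∈ R, r₁ ≠ r₂ → Reachable P.endsRed F r₁ r₂ →
    (P.InA r₁ ∧ ¬ P.InA r₂) ∨ (P.InA r₂ ∧ ¬ P.InA r₁))

/-! ### Internal activity and the edge order -/

/-- `e` is internally passive in the spanning tree `T`:  it can be exchanged
for a strictly smaller edge `f` so that the result is again a spanning tree. -/
def InternallyPassive (ord : LinearOrder P.EB) (T : Finset P.EB) (e : P.EB) : Prop :=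
  e ∈ T ∧ ∃ f : P.EB, ord.lt f e ∧ IsSpanningTree P.endsB (insert f (T.erase e))

/-- `e` is internally active in the spanning tree `T`. -/
def InternallyActive (ord : LinearOrder P.EB) (T : Finset P.EB) (e : P.EB) : Prop :=
  e ∈ T ∧ ¬ ∃ f : P.EB, ord.lt f e ∧ IsSpanningTree P.endsB (insert f (T.erase e))

/-- The number of internally passive edges of `T`. -/
def ipCount (ord : LinearOrder P.EB) (T : Finset P.EB) : ℕ :=
  (T.filter fun e => P.InternallyPassive ord T e).card

/-- The smaller endpoint of an edge of `G^{A,B}`. -/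
def endMin (e : P.EB) : P.W := Sym2.lift ⟨fun a b => a ⊓ b, fun a b => inf_comm a b⟩ (P.endsB e)
/-- The larger endpoint of an edge of `G^{A,B}`. -/
def endMax (e : P.EB) : P.W := Sym2.lift ⟨fun a b => a ⊔ b, fun a b => sup_comm a b⟩ (P.endsB e)

/-- The endpoints of an edge, as an ordered pair in the lexicographic square
of the vertex order `0 < 0̄ < 1 < ⋯ < m < 1̄ < ⋯ < n̄`. -/
def lexEnds (e : P.EB) : P.W ×ₗ P.W := toLex (P.endMin e, P.endMax e)

/-- A linear order on the edges of `G^{A,B}` is admissible if it refines the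
lexicographic order on endpoints (so parallel edges are ordered arbitrarily). -/
def AdmissibleOrder (ord : LinearOrder P.EB) : Prop :=
  ∀ e f : P.EB, P.lexEnds e < P.lexEnds f → ord.lt e f

/-- `v` is a connecting vertex of `T`:  `v ∈ A` and `v` is adjacent to `0` in
`T`, or `v ∈ Ā` and `v` is adjacent to `0̄` in `T`. -/
def ConnVertex (T : Finset P.EB) (v : P.Vred) : Prop :=
  (∃ a : Fin P.m, v = P.liftV (P.aVert a) ∧ P.eA a ∈ T) ∨
  (∃ b : Fin P.n, v = P.liftV (P.bVert b) ∧ P.eB b ∈ T)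

/-- `e` is a connecting edge of `T` (an edge `0a`, `a ∈ A`, or `0̄b`, `b ∈ Ā`)
with connecting vertex `v`. -/
def ConnEdge (T : Finset P.EB) (e : P.EB) (v : P.Vred) : Prop :=
  e ∈ T ∧ ((∃ a : Fin P.m, e = P.eA a ∧ v = P.liftV (P.aVert a)) ∨
           (∃ b : Fin P.n, e = P.eB b ∧ v = P.liftV (P.bVert b)))

/-! ### The h-vector -/

/-- `f_{i-1}`:  the number of acyclic edge sets of cardinality `i` in `G^{A,B}`. -/
def numAcyclic (i : ℕ) : ℕ :=
  Nat.card {F : Finset P.EB // IsAcyclic P.endsB F ∧ F.card = i}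

/-- The rank of the graphic matroid of `G^{A,B}`:  `|V| - 1 = m + n + 1`. -/
def d : ℕ := P.m + P.n + 1

/-- `h` is the h-vector of the graphic matroid of `G^{A,B}`:  it satisfies
`Σ_{i=0}^{d} f_{i-1} (t-1)^{d-i} = Σ_{k=0}^{d} h_k t^{d-k}`. -/
def IsHVector (h : ℕ → ℤ) : Prop :=
  ∑ i ∈ Finset.range (P.d + 1),
      Polynomial.C ((P.numAcyclic i : ℤ)) * (Polynomial.X - 1) ^ (P.d - i)
    = ∑ k ∈ Finset.range (P.d + 1), Polynomial.C (h k) * Polynomial.X ^ (P.d - k)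

end BiconedGraph

/-- `(h 0, …, h d)` is a pure O-sequence:  there is a multicomplex `M` of
multisets on a finite ground set (nonempty, closed under sub-multisets), all
of whose inclusion-maximal members have the same cardinality, whose members
all have cardinality at most `d`, and which has exactly `h i` members of
cardinality `i` for every `i ≤ d`. -/
def IsPureOSeq (d : ℕ) (h : ℕ → ℤ) : Prop :=
  ∃ (N : ℕ) (M : Set (Multiset (Fin N))),
    M.Nonempty ∧
    (∀ s ∈ M, ∀ t : Multiset (Fin N), t ≤ s → t ∈ M) ∧
    (∀ s ∈ M, ∀ t ∈ M, (∀ u ∈ M, s ≤ u → u = s) → (∀ u ∈ M, t ≤ u → u = t) →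
      Multiset.card s = Multiset.card t) ∧
    (∀ s ∈ M, Multiset.card s ≤ d) ∧
    (∀ i ≤ d, (Nat.card {s : Multiset (Fin N) // s ∈ M ∧ Multiset.card s = i} : ℤ) = h i)


/-! ### Auxiliary infrastructure for the proof -/

namespace MWalk

variable {ε ν : Type} {ends : ε → Sym2 ν}

/-- Concatenation of walks. -/
def append : ∀ {u v w : ν}, MWalk ends u v → MWalk ends v w → MWalk ends u w
  | _, _, _, nil _, q => q
  | _, _, _, cons e v h p, q => cons e v h (p.append q)

lemma edges_append : ∀ {u v w : ν} (p : MWalk ends u v) (q : MWalk ends v w),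
    (p.append q).edges = p.edges ++ q.edges
  | _, _, _, nil _, q => rfl
  | _, _, _, cons e v h p, q => by
      simp [append, edges, edges_append p q]

/-- Reversal of a walk. -/
def reverse : ∀ {u v : ν}, MWalk ends u v → MWalk ends v u
  | _, _, nil u => nil u
  | _, _, cons e v h p => p.reverse.append (cons e _ (h.trans (Sym2.eq_swap)) (nil _))

lemma mem_edges_reverse : ∀ {u v : ν} (p : MWalk ends u v) (e : ε),
    e ∈ p.reverse.edges ↔ e ∈ p.edges
  | _, _, nil _, e => Iff.rfl
  | _, _, cons f v h p, e => by
      simp [reverse, edges, edges_append, mem_edges_reverse p e, or_comm]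

end MWalk

namespace Reachable

variable {ε ν : Type} {ends : ε → Sym2 ν} {F F' : Finset ε} {u v w : ν}

lemma refl (ends : ε → Sym2 ν) (F : Finset ε) (u : ν) : Reachable ends F u u :=
  ⟨MWalk.nil u, fun e he => absurd he List.not_mem_nil⟩

lemma single {e : ε} (h : ends e = s(u, v)) (he : e ∈ F) : Reachable ends F u v :=
  ⟨MWalk.cons e v h (MWalk.nil v), fun f hf => by
    simp [MWalk.edges] at hf; subst hf; exact he⟩

lemma symm (h : Reachable ends F u v) : Reachable ends F v u := by
  obtain ⟨p, hp⟩ := h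
  exact ⟨p.reverse, fun e he => hp e ((p.mem_edges_reverse e).mp he)⟩

lemma trans (h : Reachable ends F u v) (h' : Reachable ends F v w) :
    Reachable ends F u w := by
  obtain ⟨p, hp⟩ := h
  obtain ⟨q, hq⟩ := h'
  refine ⟨p.append q, fun e he => ?_⟩
  rw [MWalk.edges_append] at he
  rcases List.mem_append.mp he with h | h
  · exact hp e h
  · exact hq e h

lemma mono (hF : F ⊆ F') (h : Reachable ends F u v) : Reachable ends F' u v := by
  obtain ⟨p, hp⟩ := h
  exact ⟨p, fun e he => hF (hp e he)⟩

end Reachable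
namespace BiconedGraph

variable {P : BiconedGraph}

@[simp] lemma liftV_ne_bot (x : P.VG) : P.liftV x ≠ ⊥ := WithBot.coe_ne_bot

@[simp] lemma liftV_inj {x y : P.VG} : P.liftV x = P.liftV y ↔ x = y := WithBot.coe_inj

@[simp] lemma liftW_ne_bot (x : P.Vred) : P.liftW x ≠ ⊥ := WithBot.coe_ne_bot

@[simp] lemma liftW_inj {x y : P.Vred} : P.liftW x = P.liftW y ↔ x = y := WithBot.coe_inj

@[simp] lemma avert_inj {a a' : Fin P.m} : P.aVert a = P.aVert a' ↔ a = a' := by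
  simp [aVert]

@[simp] lemma bvert_inj {b b' : Fin P.n} : P.bVert b = P.bVert b' ↔ b = b' := by
  simp [bVert]

@[simp] lemma avert_ne_bvert (a : Fin P.m) (b : Fin P.n) : P.aVert a ≠ P.bVert b := by
  simp [aVert, bVert]

lemma vred_cases (v : P.Vred) :
    v = ⊥ ∨ (∃ a, v = P.liftV (P.aVert a)) ∨ ∃ b, v = P.liftV (P.bVert b) := by
  induction v using WithBot.recBotCoe with
  | bot => exact Or.inl rfl
  | coe x =>
    rcases hx : ofLex x with a | b
    · refine Or.inr (Or.inl ⟨a, ?_⟩); rw [← toLex_ofLex x, hx]; rfl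
    · refine Or.inr (Or.inr ⟨b, ?_⟩); rw [← toLex_ofLex x, hx]; rfl

lemma endsB_redToEB (P : BiconedGraph) (e : P.Ered) :
    P.endsB (P.redToEB e) = (P.endsRed e).map P.liftW := by
  cases e with
  | inl a => simp [endsB, endsRed, redToEB, Sym2.map_pair_eq]
  | inr f =>
    show (P.ends f).map (fun x => P.liftW (P.liftV x)) = ((P.ends f).map P.liftV).map P.liftW
    rw [Sym2.map_map]
    rfl

lemma redToEB_inj : Function.Injective P.redToEB := by
  rintro (a | f) (a' | f') h <;> simp [redToEB] at h <;> simp [h]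

@[simp] lemma mem_redOf {T : Finset P.EB} {e : P.Ered} :
    e ∈ P.redOf T ↔ P.redToEB e ∈ T := by
  simp [redOf]

lemma redToEB_ne_e00 (e : P.Ered) : P.redToEB e ≠ P.e00 := by cases e <;> simp [redToEB]

lemma redToEB_ne_eA (e : P.Ered) (a : Fin P.m) : P.redToEB e ≠ P.eA a := by
  cases e <;> simp [redToEB]

lemma redToEB_ne_eB (e : P.Ered) (b : Fin P.n) : P.redToEB e ≠ P.eB b := by
  cases e <;> simp [redToEB]

lemma reach_lift {F' : Finset P.Ered} {T' : Finset P.EB}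
    (hFT : ∀ e ∈ F', P.redToEB e ∈ T') {u v : P.Vred}
    (h : Reachable P.endsRed F' u v) :
    Reachable P.endsB T' (P.liftW u) (P.liftW v) := by
  obtain ⟨p, hp⟩ := h
  revert hp
  induction p with
  | nil u => exact fun _ => Reachable.refl _ _ _
  | cons e w hw q ih =>
    intro hp
    refine (Reachable.single (e := P.redToEB e) ?_
        (hFT e (hp e List.mem_cons_self))).trans
      (ih fun f hf => hp f (List.mem_cons_of_mem _ hf))
    rw [P.endsB_redToEB, hw, Sym2.map_pair_eq]

end BiconedGraph
namespace BiconedGraph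

variable {P : BiconedGraph}

lemma sym2_exists {α : Type} (s : Sym2 α) : ∃ a b, s = s(a, b) := by
  induction s using Sym2.ind with
  | _ a b => exact ⟨a, b, rfl⟩

/-- `u` can reach (inside the reduced part of `T'`) a vertex of `A` that is
coned to `0` by an edge of `T'`. -/
def rh0 (T' : Finset P.EB) (u : P.Vred) : Prop :=
  ∃ a, P.eA a ∈ T' ∧ Reachable P.endsRed (P.redOf T') u (P.liftV (P.aVert a))

/-- `u` can reach (inside the reduced part of `T'`) the vertex `0̄` or a
vertex of `Ā` coned to `0̄` by an edge of `T'`. -/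
def rh1 (T' : Finset P.EB) (u : P.Vred) : Prop :=
  Reachable P.endsRed (P.redOf T') u ⊥ ∨
    ∃ b, P.eB b ∈ T' ∧ Reachable P.endsRed (P.redOf T') u (P.liftV (P.bVert b))

/-- The two hubs `0` and `0̄` are joined in `T'`. -/
def HH (T' : Finset P.EB) : Prop := P.e00 ∈ T' ∨ ∃ w, rh0 T' w ∧ rh1 T' w

/-- Upper bound for reachability from the hub `0` to a reduced vertex. -/
def Link0 (T' : Finset P.EB) (v : P.Vred) : Prop := rh0 T' v ∨ (HH T' ∧ rh1 T' v)

/-- Upper bound for reachability between two reduced vertices. -/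
def LinkV (T' : Finset P.EB) (u v : P.Vred) : Prop :=
  Reachable P.endsRed (P.redOf T') u v ∨ (rh0 T' u ∧ rh0 T' v) ∨
    (rh1 T' u ∧ rh1 T' v) ∨
    (HH T' ∧ (rh0 T' u ∨ rh1 T' u) ∧ (rh0 T' v ∨ rh1 T' v))

/-- Upper bound for reachability in `G^{A,B}` restricted to `T'`. -/
def Link (T' : Finset P.EB) (x y : P.W) : Prop :=
  WithBot.recBotCoe
    (WithBot.recBotCoe True (fun v => Link0 T' v) y)
    (fun u => WithBot.recBotCoe (Link0 T' u) (fun v => LinkV T' u v) y) x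

variable {T' : Finset P.EB}

@[simp] lemma link_bot_bot : Link T' (⊥ : P.W) ⊥ ↔ True := Iff.rfl
@[simp] lemma link_bot_coe {v : P.Vred} : Link T' (⊥ : P.W) (P.liftW v) ↔ Link0 T' v := Iff.rfl
@[simp] lemma link_coe_bot {u : P.Vred} : Link T' (P.liftW u) (⊥ : P.W) ↔ Link0 T' u := Iff.rfl
@[simp] lemma link_coe_coe {u v : P.Vred} :
    Link T' (P.liftW u) (P.liftW v) ↔ LinkV T' u v := Iff.rfl

lemma rh1_bot : rh1 T' (⊥ : P.Vred) := Or.inl (Reachable.refl _ _ _)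

lemma rh0_avert {a : Fin P.m} (ha : P.eA a ∈ T') : rh0 T' (P.liftV (P.aVert a)) :=
  ⟨a, ha, Reachable.refl _ _ _⟩

lemma rh1_bvert {b : Fin P.n} (hb : P.eB b ∈ T') : rh1 T' (P.liftV (P.bVert b)) :=
  Or.inr ⟨b, hb, Reachable.refl _ _ _⟩

lemma hh_of {w : P.Vred} (h0 : rh0 T' w) (h1 : rh1 T' w) : HH T' := Or.inr ⟨w, h0, h1⟩

lemma rh0_trans {u v : P.Vred} (h : Reachable P.endsRed (P.redOf T') u v)
    (hv : rh0 T' v) : rh0 T' u := by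
  obtain ⟨a, ha, hr⟩ := hv; exact ⟨a, ha, h.trans hr⟩

lemma rh1_trans {u v : P.Vred} (h : Reachable P.endsRed (P.redOf T') u v)
    (hv : rh1 T' v) : rh1 T' u := by
  rcases hv with hr | ⟨b, hb, hr⟩
  · exact Or.inl (h.trans hr)
  · exact Or.inr ⟨b, hb, h.trans hr⟩

lemma linkV_refl (u : P.Vred) : LinkV T' u u := Or.inl (Reachable.refl _ _ _)

lemma link_refl (x : P.W) : Link T' x x := by
  induction x using WithBot.recBotCoe with
  | bot => trivial
  | coe u => exact linkV_refl u

lemma linkV_symm {u v : P.Vred} (h : LinkV T' u v) : LinkV T' v u := by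
  rcases h with h | h | h | ⟨h1, h2, h3⟩
  · exact Or.inl h.symm
  · exact Or.inr (Or.inl ⟨h.2, h.1⟩)
  · exact Or.inr (Or.inr (Or.inl ⟨h.2, h.1⟩))
  · exact Or.inr (Or.inr (Or.inr ⟨h1, h3, h2⟩))

lemma link_symm {x y : P.W} (h : Link T' x y) : Link T' y x := by
  induction x using WithBot.recBotCoe with
  | bot =>
    induction y using WithBot.recBotCoe with
    | bot => trivial
    | coe v => exact h
  | coe u =>
    induction y using WithBot.recBotCoe with
    | bot => exact h
    | coe v => exact linkV_symm h

lemma link_red {u v : P.Vred} (he : Reachable P.endsRed (P.redOf T') u v) {x : P.W}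
    (h : Link T' x (P.liftW u)) : Link T' x (P.liftW v) := by
  induction x using WithBot.recBotCoe with
  | bot =>
    rcases h with h | ⟨hH, h⟩
    · exact Or.inl (rh0_trans he.symm h)
    · exact Or.inr ⟨hH, rh1_trans he.symm h⟩
  | coe w =>
    rcases h with h | ⟨h1, h2⟩ | ⟨h1, h2⟩ | ⟨hH, h1, h2⟩
    · exact Or.inl (h.trans he)
    · exact Or.inr (Or.inl ⟨h1, rh0_trans he.symm h2⟩)
    · exact Or.inr (Or.inr (Or.inl ⟨h1, rh1_trans he.symm h2⟩))
    · refine Or.inr (Or.inr (Or.inr ⟨hH, h1, ?_⟩))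
      rcases h2 with h2 | h2
      · exact Or.inl (rh0_trans he.symm h2)
      · exact Or.inr (rh1_trans he.symm h2)

lemma link_e00 (he : P.e00 ∈ T') {x : P.W} :
    Link T' x (⊥ : P.W) ↔ Link T' x (P.liftW ⊥) := by
  have hH : HH T' := Or.inl he
  have h1b : rh1 T' (⊥ : P.Vred) := rh1_bot
  induction x using WithBot.recBotCoe with
  | bot => exact iff_of_true trivial (Or.inr ⟨hH, h1b⟩)
  | coe u =>
    have himp : Reachable P.endsRed (P.redOf T') u ⊥ → rh1 T' u := Or.inl
    show Link0 T' u ↔ LinkV T' u ⊥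
    unfold Link0 LinkV
    tauto

lemma link_eA {a : Fin P.m} (ha : P.eA a ∈ T') {x : P.W} :
    Link T' x (⊥ : P.W) ↔ Link T' x (P.liftW (P.liftV (P.aVert a))) := by
  have h0a : rh0 T' (P.liftV (P.aVert a)) := rh0_avert ha
  induction x using WithBot.recBotCoe with
  | bot => exact iff_of_true trivial (Or.inl h0a)
  | coe u =>
    have himp : Reachable P.endsRed (P.redOf T') u (P.liftV (P.aVert a)) → rh0 T' u :=
      fun h => rh0_trans h h0a
    have hHH : rh1 T' (P.liftV (P.aVert a)) → HH T' := hh_of h0a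
    show Link0 T' u ↔ LinkV T' u (P.liftV (P.aVert a))
    unfold Link0 LinkV
    tauto

lemma link_eB {b : Fin P.n} (hb : P.eB b ∈ T') {x : P.W} :
    Link T' x (P.liftW ⊥) ↔ Link T' x (P.liftW (P.liftV (P.bVert b))) := by
  have h1b : rh1 T' (P.liftV (P.bVert b)) := rh1_bvert hb
  have h1bot : rh1 T' (⊥ : P.Vred) := rh1_bot
  have hh1 : rh0 T' (⊥ : P.Vred) → HH T' := fun h => hh_of h h1bot
  have hh2 : rh0 T' (P.liftV (P.bVert b)) → HH T' := fun h => hh_of h h1b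
  induction x using WithBot.recBotCoe with
  | bot =>
    show Link0 T' (⊥ : P.Vred) ↔ Link0 T' (P.liftV (P.bVert b))
    unfold Link0
    tauto
  | coe u =>
    have himp1 : Reachable P.endsRed (P.redOf T') u ⊥ → rh1 T' u := Or.inl
    have himp2 : Reachable P.endsRed (P.redOf T') u (P.liftV (P.bVert b)) → rh1 T' u :=
      fun h => Or.inr ⟨b, hb, h⟩
    show LinkV T' u ⊥ ↔ LinkV T' u (P.liftV (P.bVert b))
    constructor
    · rintro (h | ⟨h1, h2⟩ | ⟨h1, h2⟩ | ⟨hH, h1, h2⟩)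
      · exact Or.inr (Or.inr (Or.inl ⟨himp1 h, h1b⟩))
      · exact Or.inr (Or.inr (Or.inr ⟨hh1 h2, Or.inl h1, Or.inr h1b⟩))
      · exact Or.inr (Or.inr (Or.inl ⟨h1, h1b⟩))
      · exact Or.inr (Or.inr (Or.inr ⟨hH, h1, Or.inr h1b⟩))
    · rintro (h | ⟨h1, h2⟩ | ⟨h1, h2⟩ | ⟨hH, h1, h2⟩)
      · exact Or.inr (Or.inr (Or.inl ⟨himp2 h, h1bot⟩))
      · exact Or.inr (Or.inr (Or.inr ⟨hh2 h2, Or.inl h1, Or.inr h1bot⟩))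
      · exact Or.inr (Or.inr (Or.inl ⟨h1, h1bot⟩))
      · exact Or.inr (Or.inr (Or.inr ⟨hH, h1, Or.inr h1bot⟩))

lemma link_step_red {e : P.Ered} (he : P.redToEB e ∈ T') {x y z : P.W}
    (hyz : P.endsB (P.redToEB e) = s(y, z)) (h : Link T' x y) : Link T' x z := by
  rw [P.endsB_redToEB] at hyz
  obtain ⟨u, v, huv⟩ := sym2_exists (P.endsRed e)
  rw [huv, Sym2.map_pair_eq] at hyz
  have hr : Reachable P.endsRed (P.redOf T') u v :=
    Reachable.single huv (mem_redOf.mpr he)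
  rcases Sym2.eq_iff.mp hyz with ⟨hy, hz⟩ | ⟨hy, hz⟩
  · subst hy; subst hz; exact link_red hr h
  · subst hy; subst hz; exact link_red hr.symm h

lemma link_step {e : P.EB} (he : e ∈ T') {x y z : P.W}
    (hyz : P.endsB e = s(y, z)) (h : Link T' x y) : Link T' x z := by
  rcases e with u | (a | (b | (a | f)))
  · cases u
    have h0 : P.endsB P.e00 = s((⊥ : P.W), P.liftW ⊥) := rfl
    rcases Sym2.eq_iff.mp (h0.symm.trans hyz) with ⟨hy, hz⟩ | ⟨hy, hz⟩
    · subst hy; subst hz; exact (link_e00 he).mp h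
    · subst hy; subst hz; exact (link_e00 he).mpr h
  · have h0 : P.endsB (P.eA a) = s((⊥ : P.W), P.liftW (P.liftV (P.aVert a))) := rfl
    rcases Sym2.eq_iff.mp (h0.symm.trans hyz) with ⟨hy, hz⟩ | ⟨hy, hz⟩
    · subst hy; subst hz; exact (link_eA he).mp h
    · subst hy; subst hz; exact (link_eA he).mpr h
  · have h0 : P.endsB (P.eB b) = s(P.liftW ⊥, P.liftW (P.liftV (P.bVert b))) := rfl
    rcases Sym2.eq_iff.mp (h0.symm.trans hyz) with ⟨hy, hz⟩ | ⟨hy, hz⟩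
    · subst hy; subst hz; exact (link_eB he).mp h
    · subst hy; subst hz; exact (link_eB he).mpr h
  · exact link_step_red (e := Sum.inl a) he hyz h
  · exact link_step_red (e := Sum.inr f) he hyz h

/-- The master lemma: reachability in `T'` implies `Link`. -/
lemma reach_link {x y : P.W} (h : Reachable P.endsB T' x y) : Link T' x y := by
  obtain ⟨p, hp⟩ := h
  revert hp
  induction p with
  | nil u => exact fun _ => link_refl u
  | cons e v hv q ih =>
    intro hp
    have hq := ih fun f hf => hp f (List.mem_cons_of_mem _ hf)
    exact link_symm (link_step (hp e List.mem_cons_self)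
      (hv.trans Sym2.eq_swap) (link_symm hq))

end BiconedGraph
namespace BiconedGraph

variable {P : BiconedGraph}

/-- The root set associated to a spanning tree: `0̄` together with the
connecting vertices. -/
def rootsOf (T : Finset P.EB) : Set P.Vred :=
  {v | v = ⊥ ∨ (∃ a, v = P.liftV (P.aVert a) ∧ P.eA a ∈ T) ∨
    ∃ b, v = P.liftV (P.bVert b) ∧ P.eB b ∈ T}

/-- There is a birooted component. -/
def HasBi (F : Finset P.Ered) (R : Set P.Vred) : Prop :=
  ∃ r₁ ∈ R, ∃ r₂ ∈ R, r₁ ≠ r₂ ∧ Reachable P.endsRed F r₁ r₂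

/-- The spanning tree associated to a birooted forest. -/
def treeOf (F : Finset P.Ered) (R : Set P.Vred) : Finset P.EB :=
  Finset.univ.filter fun e => match e with
    | Sum.inl _ => ¬ HasBi F R
    | Sum.inr (Sum.inl a) => P.liftV (P.aVert a) ∈ R
    | Sum.inr (Sum.inr (Sum.inl b)) => P.liftV (P.bVert b) ∈ R
    | Sum.inr (Sum.inr (Sum.inr (Sum.inl a))) => Sum.inl a ∈ F
    | Sum.inr (Sum.inr (Sum.inr (Sum.inr f))) => Sum.inr f ∈ F

variable {F : Finset P.Ered} {R : Set P.Vred} {T : Finset P.EB}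

@[simp] lemma mem_treeOf_e00 : P.e00 ∈ treeOf F R ↔ ¬ HasBi F R := by
  simp [treeOf, e00]

@[simp] lemma mem_treeOf_eA {a : Fin P.m} :
    P.eA a ∈ treeOf F R ↔ P.liftV (P.aVert a) ∈ R := by simp [treeOf, eA]

@[simp] lemma mem_treeOf_eB {b : Fin P.n} :
    P.eB b ∈ treeOf F R ↔ P.liftV (P.bVert b) ∈ R := by simp [treeOf, eB]

@[simp] lemma mem_treeOf_red {e : P.Ered} :
    P.redToEB e ∈ treeOf F R ↔ e ∈ F := by
  cases e <;> simp [treeOf, redToEB, eS, eG]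

/-- An `A`-type root. -/
def AType (T : Finset P.EB) (r : P.Vred) : Prop :=
  ∃ a, r = P.liftV (P.aVert a) ∧ P.eA a ∈ T

/-- A `0̄`-type root. -/
def ZType (T : Finset P.EB) (r : P.Vred) : Prop :=
  r = ⊥ ∨ ∃ b, r = P.liftV (P.bVert b) ∧ P.eB b ∈ T

lemma roots_iff {r : P.Vred} : r ∈ rootsOf T ↔ AType T r ∨ ZType T r := by
  constructor
  · rintro (h | h | h)
    exacts [Or.inr (Or.inl h), Or.inl h, Or.inr (Or.inr h)]
  · rintro (h | h | h)
    exacts [Or.inr (Or.inl h), Or.inl h, Or.inr (Or.inr h)]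

lemma AType.inA {r : P.Vred} (h : AType T r) : P.InA r := ⟨h.choose, h.choose_spec.1⟩

lemma ZType.not_inA {r : P.Vred} (h : ZType T r) : ¬ P.InA r := by
  rintro ⟨a, rfl⟩
  rcases h with h | ⟨b, hb, _⟩
  · exact liftV_ne_bot _ h
  · exact avert_ne_bvert a b (liftV_inj.mp hb)

lemma sub_erase_eA {a : Fin P.m} (f : P.Ered) (hf : f ∈ P.redOf T) :
    P.redToEB f ∈ T.erase (P.eA a) :=
  Finset.mem_erase.mpr ⟨redToEB_ne_eA f a, mem_redOf.mp hf⟩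

lemma sub_erase_eB {b : Fin P.n} (f : P.Ered) (hf : f ∈ P.redOf T) :
    P.redToEB f ∈ T.erase (P.eB b) :=
  Finset.mem_erase.mpr ⟨redToEB_ne_eB f b, mem_redOf.mp hf⟩

lemma sub_erase_e00 (f : P.Ered) (hf : f ∈ P.redOf T) :
    P.redToEB f ∈ T.erase P.e00 :=
  Finset.mem_erase.mpr ⟨redToEB_ne_e00 f, mem_redOf.mp hf⟩

/-- From a `0̄`-type root one can reach `0̄` avoiding `e00` and any `eA`. -/
lemma ztype_reach_bar {r : P.Vred} (h : ZType T r) {T'' : Finset P.EB}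
    (hsub : ∀ b : Fin P.n, P.eB b ∈ T → P.eB b ∈ T'') :
    Reachable P.endsB T'' (P.liftW r) (P.liftW ⊥) := by
  rcases h with rfl | ⟨b, rfl, hb⟩
  · exact Reachable.refl _ _ _
  · exact (Reachable.single
      (show P.endsB (P.eB b) = s(P.liftW ⊥, P.liftW (P.liftV (P.bVert b))) from rfl)
      (hsub b hb)).symm

lemma fwd_acyclic (hT : IsAcyclic P.endsB T) : IsAcyclic P.endsRed (P.redOf T) := by
  intro e he u v huv hre
  refine hT (P.redToEB e) (mem_redOf.mp he) (P.liftW u) (P.liftW v) ?_ ?_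
  · rw [P.endsB_redToEB, huv, Sym2.map_pair_eq]
  · refine reach_lift (fun f hf => ?_) hre
    rcases Finset.mem_erase.mp hf with ⟨hne, hmem⟩
    exact Finset.mem_erase.mpr ⟨fun hc => hne (redToEB_inj hc), mem_redOf.mp hmem⟩

lemma fwd_not_bothA (hT : IsSpanningTree P.endsB T) {a₁ a₂ : Fin P.m}
    (h1 : P.eA a₁ ∈ T) (h2 : P.eA a₂ ∈ T) (hne : a₁ ≠ a₂)
    (hr : Reachable P.endsRed (P.redOf T) (P.liftV (P.aVert a₁)) (P.liftV (P.aVert a₂))) :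
    False := by
  refine hT.1 (P.eA a₁) h1 ⊥ (P.liftW (P.liftV (P.aVert a₁))) rfl ?_
  refine (Reachable.single (e := P.eA a₂)
    (show P.endsB (P.eA a₂) = s((⊥ : P.W), P.liftW (P.liftV (P.aVert a₂))) from rfl) ?_).trans (reach_lift sub_erase_eA hr.symm)
  exact Finset.mem_erase.mpr ⟨by simpa using hne.symm, h2⟩

lemma fwd_not_bothZ (hT : IsSpanningTree P.endsB T) {r₁ r₂ : P.Vred}
    (h1 : ZType T r₁) (h2 : ZType T r₂) (hne : r₁ ≠ r₂)
    (hr : Reachable P.endsRed (P.redOf T) r₁ r₂) : False := by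
  rcases h1 with rfl | ⟨b₁, rfl, hb₁⟩
  · rcases h2 with rfl | ⟨b₂, rfl, hb₂⟩
    · exact hne rfl
    · exact hT.1 (P.eB b₂) hb₂ (P.liftW ⊥) (P.liftW (P.liftV (P.bVert b₂))) rfl
        (reach_lift sub_erase_eB hr)
  · rcases h2 with rfl | ⟨b₂, rfl, hb₂⟩
    · exact hT.1 (P.eB b₁) hb₁ (P.liftW ⊥) (P.liftW (P.liftV (P.bVert b₁))) rfl
        (reach_lift sub_erase_eB hr.symm)
    · have hb : b₁ ≠ b₂ := fun hc => hne (by rw [hc])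
      refine hT.1 (P.eB b₁) hb₁ (P.liftW ⊥) (P.liftW (P.liftV (P.bVert b₁))) rfl ?_
      refine (Reachable.single (e := P.eB b₂)
        (show P.endsB (P.eB b₂) = s(P.liftW ⊥, P.liftW (P.liftV (P.bVert b₂))) from rfl) ?_).trans (reach_lift sub_erase_eB hr.symm)
      exact Finset.mem_erase.mpr ⟨by simpa using hb.symm, hb₂⟩

/-- Two distinct roots joined in the forest: extract the `A`-side and the
`0̄`-side of the birooted component. -/
lemma fwd_pair (hT : IsSpanningTree P.endsB T) {r₁ r₂ : P.Vred}
    (h1 : r₁ ∈ rootsOf T) (h2 : r₂ ∈ rootsOf T) (hne : r₁ ≠ r₂)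
    (hr : Reachable P.endsRed (P.redOf T) r₁ r₂) :
    ∃ a s, P.eA a ∈ T ∧ ZType T s ∧
      Reachable P.endsRed (P.redOf T) r₁ (P.liftV (P.aVert a)) ∧
      Reachable P.endsRed (P.redOf T) (P.liftV (P.aVert a)) s := by
  rcases roots_iff.mp h1 with ⟨a₁, rfl, ha₁⟩ | hz₁
  · rcases roots_iff.mp h2 with ⟨a₂, rfl, ha₂⟩ | hz₂
    · exact absurd (fwd_not_bothA hT ha₁ ha₂ (fun hc => hne (by rw [hc])) hr) id
    · exact ⟨a₁, r₂, ha₁, hz₂, Reachable.refl _ _ _, hr⟩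
  · rcases roots_iff.mp h2 with ⟨a₂, rfl, ha₂⟩ | hz₂
    · exact ⟨a₂, r₁, ha₂, hz₁, hr, hr.symm⟩
    · exact absurd (fwd_not_bothZ hT hz₁ hz₂ hne hr) id

lemma fwd_e00_iff (hT : IsSpanningTree P.endsB T) :
    P.e00 ∈ T ↔ ¬ HasBi (P.redOf T) (rootsOf T) := by
  constructor
  · rintro he ⟨r₁, h1, r₂, h2, hne, hr⟩
    obtain ⟨a, s, haT, hsZ, _, has⟩ := fwd_pair hT h1 h2 hne hr
    refine hT.1 P.e00 he ⊥ (P.liftW ⊥) rfl ?_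
    refine (Reachable.single (e := P.eA a)
      (show P.endsB (P.eA a) = s((⊥ : P.W), P.liftW (P.liftV (P.aVert a))) from rfl) ?_).trans
      (((reach_lift sub_erase_e00 has)).trans
        (ztype_reach_bar hsZ fun b hb => Finset.mem_erase.mpr ⟨by simp [eB, e00], hb⟩))
    exact Finset.mem_erase.mpr ⟨by simp [eA, e00], haT⟩
  · intro hnb
    by_contra he
    have hlink := reach_link (T' := T) (hT.2 ⊥ (P.liftW ⊥))
    rcases (link_bot_coe.mp hlink) with ⟨a, haT, hre⟩ | ⟨hH, h1⟩
    · exact hnb ⟨⊥, Or.inl rfl, P.liftV (P.aVert a),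
        Or.inr (Or.inl ⟨a, rfl, haT⟩), (liftV_ne_bot _).symm, hre⟩
    · rcases hH with hH | ⟨w, ⟨a, haT, hwa⟩, hw1⟩
      · exact he hH
      · rcases hw1 with hwb | ⟨b, hbT, hwb⟩
        · exact hnb ⟨P.liftV (P.aVert a), Or.inr (Or.inl ⟨a, rfl, haT⟩), ⊥, Or.inl rfl,
            liftV_ne_bot _, hwa.symm.trans hwb⟩
        · exact hnb ⟨P.liftV (P.aVert a), Or.inr (Or.inl ⟨a, rfl, haT⟩),
            P.liftV (P.bVert b), Or.inr (Or.inr ⟨b, rfl, hbT⟩),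
            by simp, hwa.symm.trans hwb⟩

lemma fwd_root_exists (hT : IsSpanningTree P.endsB T) (v : P.Vred) :
    ∃ r ∈ rootsOf T, Reachable P.endsRed (P.redOf T) v r := by
  have hlink := reach_link (T' := T) (hT.2 (P.liftW v) ⊥)
  rcases (link_coe_bot.mp hlink) with ⟨a, haT, hre⟩ | ⟨_, h1⟩
  · exact ⟨P.liftV (P.aVert a), Or.inr (Or.inl ⟨a, rfl, haT⟩), hre⟩
  · rcases h1 with hre | ⟨b, hbT, hre⟩
    · exact ⟨⊥, Or.inl rfl, hre⟩
    · exact ⟨P.liftV (P.bVert b), Or.inr (Or.inr ⟨b, rfl, hbT⟩), hre⟩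

lemma fwd_no_three (hT : IsSpanningTree P.endsB T) {r₁ r₂ r₃ : P.Vred}
    (h1 : r₁ ∈ rootsOf T) (h2 : r₂ ∈ rootsOf T) (h3 : r₃ ∈ rootsOf T)
    (h12 : r₁ ≠ r₂) (h13 : r₁ ≠ r₃) (h23 : r₂ ≠ r₃)
    (hr12 : Reachable P.endsRed (P.redOf T) r₁ r₂)
    (hr13 : Reachable P.endsRed (P.redOf T) r₁ r₃) : False := by
  have hr23 : Reachable P.endsRed (P.redOf T) r₂ r₃ := hr12.symm.trans hr13
  rcases roots_iff.mp h1 with ⟨a₁, rfl, ha₁⟩ | hz₁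
  · rcases roots_iff.mp h2 with ⟨a₂, rfl, ha₂⟩ | hz₂
    · exact fwd_not_bothA hT ha₁ ha₂ (fun hc => h12 (by rw [hc])) hr12
    · rcases roots_iff.mp h3 with ⟨a₃, rfl, ha₃⟩ | hz₃
      · exact fwd_not_bothA hT ha₁ ha₃ (fun hc => h13 (by rw [hc])) hr13
      · exact fwd_not_bothZ hT hz₂ hz₃ h23 hr23
  · rcases roots_iff.mp h2 with ⟨a₂, rfl, ha₂⟩ | hz₂
    · rcases roots_iff.mp h3 with ⟨a₃, rfl, ha₃⟩ | hz₃
      · exact fwd_not_bothA hT ha₂ ha₃ (fun hc => h23 (by rw [hc])) hr23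
      · exact fwd_not_bothZ hT hz₁ hz₃ h13 hr13
    · exact fwd_not_bothZ hT hz₁ hz₂ h12 hr12

lemma fwd_one_bi (hT : IsSpanningTree P.endsB T) {r₁ r₂ r₃ r₄ : P.Vred}
    (h1 : r₁ ∈ rootsOf T) (h2 : r₂ ∈ rootsOf T) (h3 : r₃ ∈ rootsOf T)
    (h4 : r₄ ∈ rootsOf T) (h12 : r₁ ≠ r₂) (h34 : r₃ ≠ r₄)
    (hr12 : Reachable P.endsRed (P.redOf T) r₁ r₂)
    (hr34 : Reachable P.endsRed (P.redOf T) r₃ r₄) :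
    Reachable P.endsRed (P.redOf T) r₁ r₃ := by
  by_contra hn
  obtain ⟨a₁, s₁, ha₁, hs₁, hra₁, has₁⟩ := fwd_pair hT h1 h2 h12 hr12
  obtain ⟨a₂, s₂, ha₂, hs₂, hra₂, has₂⟩ := fwd_pair hT h3 h4 h34 hr34
  have hnaa : ¬ Reachable P.endsRed (P.redOf T)
      (P.liftV (P.aVert a₁)) (P.liftV (P.aVert a₂)) :=
    fun hc => hn ((hra₁.trans hc).trans hra₂.symm)
  have hane : a₁ ≠ a₂ := fun hc => hnaa (by rw [hc]; exact Reachable.refl _ _ _)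
  refine hT.1 (P.eA a₁) ha₁ ⊥ (P.liftW (P.liftV (P.aVert a₁))) rfl ?_
  have hsub : ∀ b : Fin P.n, P.eB b ∈ T → P.eB b ∈ T.erase (P.eA a₁) :=
    fun b hb => Finset.mem_erase.mpr ⟨by simp [eA, eB], hb⟩
  refine (Reachable.single (e := P.eA a₂)
      (show P.endsB (P.eA a₂) = s((⊥ : P.W), P.liftW (P.liftV (P.aVert a₂))) from rfl)
      (Finset.mem_erase.mpr ⟨by simpa using hane.symm, ha₂⟩)).trans ?_
  refine ((reach_lift sub_erase_eA has₂).trans (ztype_reach_bar hs₂ hsub)).trans ?_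
  exact ((ztype_reach_bar hs₁ hsub).symm).trans (reach_lift sub_erase_eA has₁.symm)

/-- Forward direction: the image of a spanning tree is a birooted forest. -/
lemma fwd_birooted (hT : IsSpanningTree P.endsB T) :
    P.IsBirootedForest (P.redOf T) (rootsOf T) := by
  refine ⟨fwd_acyclic hT.1, Or.inl rfl, fwd_root_exists hT, ?_, ?_, ?_⟩
  · intro r₁ h1 r₂ h2 r₃ h3 h12 h13 h23 hr12 hr13
    exact fwd_no_three hT h1 h2 h3 h12 h13 h23 hr12 hr13
  · intro r₁ h1 r₂ h2 r₃ h3 r₄ h4 h12 h34 hr12 hr34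
    exact fwd_one_bi hT h1 h2 h3 h4 h12 h34 hr12 hr34
  · intro r₁ h1 r₂ h2 hne hr
    rcases roots_iff.mp h1 with hA₁ | hz₁
    · rcases roots_iff.mp h2 with hA₂ | hz₂
      · obtain ⟨a₁, rfl, ha₁⟩ := hA₁
        obtain ⟨a₂, rfl, ha₂⟩ := hA₂
        exact absurd (fwd_not_bothA hT ha₁ ha₂ (fun hc => hne (by rw [hc])) hr) id
      · exact Or.inl ⟨hA₁.inA, hz₂.not_inA⟩
    · rcases roots_iff.mp h2 with hA₂ | hz₂
      · exact Or.inr ⟨hA₂.inA, hz₁.not_inA⟩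
      · exact absurd (fwd_not_bothZ hT hz₁ hz₂ hne hr) id

end BiconedGraph
namespace BiconedGraph

variable {P : BiconedGraph} {F : Finset P.Ered} {R : Set P.Vred} {T : Finset P.EB}

lemma redOf_treeOf : P.redOf (treeOf F R) = F := by
  ext f; simp

lemma rootsOf_treeOf (hbot : (⊥ : P.Vred) ∈ R) : rootsOf (treeOf F R) = R := by
  ext v; constructor
  · rintro (rfl | ⟨a, rfl, ha⟩ | ⟨b, rfl, hb⟩)
    exacts [hbot, mem_treeOf_eA.mp ha, mem_treeOf_eB.mp hb]
  · intro hv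
    rcases vred_cases v with rfl | ⟨a, rfl⟩ | ⟨b, rfl⟩
    · exact Or.inl rfl
    · exact Or.inr (Or.inl ⟨a, rfl, mem_treeOf_eA.mpr hv⟩)
    · exact Or.inr (Or.inr ⟨b, rfl, mem_treeOf_eB.mpr hv⟩)

lemma redOf_erase_e00 : P.redOf (T.erase P.e00) = P.redOf T := by
  ext f; simp [Finset.mem_erase, redToEB_ne_e00 f]

lemma redOf_erase_eA {a : Fin P.m} : P.redOf (T.erase (P.eA a)) = P.redOf T := by
  ext f; simp [Finset.mem_erase, redToEB_ne_eA f a]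

lemma redOf_erase_eB {b : Fin P.n} : P.redOf (T.erase (P.eB b)) = P.redOf T := by
  ext f; simp [Finset.mem_erase, redToEB_ne_eB f b]

lemma redOf_erase_red {e₀ : P.Ered} :
    P.redOf (T.erase (P.redToEB e₀)) = (P.redOf T).erase e₀ := by
  ext f; simp [Finset.mem_erase, redToEB_inj.ne_iff]

lemma inA_avert (a : Fin P.m) : P.InA (P.liftV (P.aVert a)) := ⟨a, rfl⟩

lemma not_inA_bot : ¬ P.InA (⊥ : P.Vred) := by
  rintro ⟨a, h⟩; exact liftV_ne_bot _ h.symm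

lemma not_inA_bvert (b : Fin P.n) : ¬ P.InA (P.liftV (P.bVert b)) := by
  rintro ⟨a, h⟩; exact avert_ne_bvert a b (liftV_inj.mp h.symm)

section Backward

variable (hB : P.IsBirootedForest F R)

lemma aroot_rh0 {T' : Finset P.EB} (hsub : T' ⊆ treeOf F R) {w : P.Vred}
    (h0 : rh0 T' w) :
    ∃ a, P.eA a ∈ T' ∧ P.liftV (P.aVert a) ∈ R ∧
      Reachable P.endsRed (P.redOf T') w (P.liftV (P.aVert a)) := by
  obtain ⟨a, ha, hr⟩ := h0
  exact ⟨a, ha, mem_treeOf_eA.mp (hsub ha), hr⟩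

lemma zroot_rh1 (hbot : (⊥ : P.Vred) ∈ R) {T' : Finset P.EB} (hsub : T' ⊆ treeOf F R)
    {w : P.Vred} (h1 : rh1 T' w) :
    ∃ s, s ∈ R ∧ ¬ P.InA s ∧ Reachable P.endsRed (P.redOf T') w s ∧
      (s = ⊥ ∨ ∃ b, s = P.liftV (P.bVert b) ∧ P.eB b ∈ T') := by
  rcases h1 with hr | ⟨b, hb, hr⟩
  · exact ⟨⊥, hbot, not_inA_bot, hr, Or.inl rfl⟩
  · exact ⟨P.liftV (P.bVert b), mem_treeOf_eB.mp (hsub hb), not_inA_bvert b, hr,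
      Or.inr ⟨b, rfl, hb⟩⟩

lemma pair_of_hh (hbot : (⊥ : P.Vred) ∈ R) {T' : Finset P.EB} (hsub : T' ⊆ treeOf F R)
    {w : P.Vred} (h0 : rh0 T' w) (h1 : rh1 T' w) :
    ∃ a s, P.eA a ∈ T' ∧ P.liftV (P.aVert a) ∈ R ∧ s ∈ R ∧ ¬ P.InA s ∧
      (s = ⊥ ∨ ∃ b, s = P.liftV (P.bVert b) ∧ P.eB b ∈ T') ∧
      Reachable P.endsRed (P.redOf T') (P.liftV (P.aVert a)) s := by
  obtain ⟨a, haT, haR, hra⟩ := aroot_rh0 hsub h0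
  obtain ⟨s, hsR, hsA, hrs, hstr⟩ := zroot_rh1 hbot hsub h1
  exact ⟨a, s, haT, haR, hsR, hsA, hstr, hra.symm.trans hrs⟩

lemma avert_ne_of_not_inA {a : Fin P.m} {s : P.Vred} (hs : ¬ P.InA s) :
    P.liftV (P.aVert a) ≠ s := fun hc => hs (hc ▸ inA_avert a)

include hB

lemma bwd_not_both_inA {r₁ r₂ : P.Vred} (h1 : r₁ ∈ R) (h2 : r₂ ∈ R) (hne : r₁ ≠ r₂)
    (hr : Reachable P.endsRed F r₁ r₂) (hi1 : P.InA r₁) (hi2 : P.InA r₂) : False := by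
  rcases hB.2.2.2.2.2 r₁ h1 r₂ h2 hne hr with ⟨_, hn⟩ | ⟨_, hn⟩
  exacts [hn hi2, hn hi1]

lemma bwd_not_both_notA {r₁ r₂ : P.Vred} (h1 : r₁ ∈ R) (h2 : r₂ ∈ R) (hne : r₁ ≠ r₂)
    (hr : Reachable P.endsRed F r₁ r₂) (hi1 : ¬ P.InA r₁) (hi2 : ¬ P.InA r₂) : False := by
  rcases hB.2.2.2.2.2 r₁ h1 r₂ h2 hne hr with ⟨hn, _⟩ | ⟨hn, _⟩
  exacts [hi1 hn, hi2 hn]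

/-- Connectivity of the tree associated to a birooted forest. -/
lemma bwd_bar_zero : Reachable P.endsB (treeOf F R) (P.liftW ⊥) (⊥ : P.W) := by
  by_cases hbi : HasBi F R
  · obtain ⟨r₁, h1, r₂, h2, hne, hr⟩ := hbi
    have key : ∀ rA rZ : P.Vred, rA ∈ R → rZ ∈ R → P.InA rA → ¬ P.InA rZ →
        Reachable P.endsRed F rA rZ →
        Reachable P.endsB (treeOf F R) (P.liftW ⊥) (⊥ : P.W) := by
      intro rA rZ hAR hZR hiA hiZ hrr
      obtain ⟨a, rfl⟩ := hiA
      have hstep : Reachable P.endsB (treeOf F R) (P.liftW rZ) (⊥ : P.W) := by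
        have hlift : Reachable P.endsB (treeOf F R) (P.liftW rZ)
            (P.liftW (P.liftV (P.aVert a))) :=
          reach_lift (fun f hf => mem_treeOf_red.mpr hf) hrr.symm
        exact hlift.trans ((Reachable.single
          (show P.endsB (P.eA a) = s((⊥ : P.W), P.liftW (P.liftV (P.aVert a))) from rfl)
          (mem_treeOf_eA.mpr hAR)).symm)
      rcases vred_cases rZ with rfl | ⟨a', rfl⟩ | ⟨b, rfl⟩
      · exact hstep
      · exact absurd (inA_avert a') hiZ
      · refine (Reachable.single
          (show P.endsB (P.eB b) = s(P.liftW ⊥, P.liftW (P.liftV (P.bVert b))) from rfl)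
          (mem_treeOf_eB.mpr hZR)).trans hstep
    rcases hB.2.2.2.2.2 r₁ h1 r₂ h2 hne hr with ⟨hi1, hi2⟩ | ⟨hi2, hi1⟩
    · exact key r₁ r₂ h1 h2 hi1 hi2 hr
    · exact key r₂ r₁ h2 h1 hi2 hi1 hr.symm
  · exact (Reachable.single (show P.endsB P.e00 = s((⊥ : P.W), P.liftW ⊥) from rfl)
      (mem_treeOf_e00.mpr hbi)).symm

lemma bwd_root_zero {r : P.Vred} (hrR : r ∈ R) :
    Reachable P.endsB (treeOf F R) (P.liftW r) (⊥ : P.W) := by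
  rcases vred_cases r with rfl | ⟨a, rfl⟩ | ⟨b, rfl⟩
  · exact bwd_bar_zero hB
  · exact (Reachable.single
      (show P.endsB (P.eA a) = s((⊥ : P.W), P.liftW (P.liftV (P.aVert a))) from rfl)
      (mem_treeOf_eA.mpr hrR)).symm
  · exact ((Reachable.single
      (show P.endsB (P.eB b) = s(P.liftW ⊥, P.liftW (P.liftV (P.bVert b))) from rfl)
      (mem_treeOf_eB.mpr hrR)).symm).trans (bwd_bar_zero hB)

lemma bwd_conn (x y : P.W) : Reachable P.endsB (treeOf F R) x y := by
  have hz : ∀ x : P.W, Reachable P.endsB (treeOf F R) x (⊥ : P.W) := by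
    intro x
    induction x using WithBot.recBotCoe with
    | bot => exact Reachable.refl _ _ _
    | coe v =>
      obtain ⟨r, hrR, hrv⟩ := hB.2.2.1 v
      exact (reach_lift (fun f hf => mem_treeOf_red.mpr hf) hrv).trans (bwd_root_zero hB hrR)
  exact (hz x).trans (hz y).symm


lemma bwd_acyclic_red {e₀ : P.Ered} (he : P.redToEB e₀ ∈ treeOf F R) {u v : P.W}
    (huv : P.endsB (P.redToEB e₀) = s(u, v))
    (hre : Reachable P.endsB ((treeOf F R).erase (P.redToEB e₀)) u v) : False := by
  obtain ⟨hac, hbot, hex, h3, h5, h6⟩ := hB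
  have hBfull : P.IsBirootedForest F R := ⟨hac, hbot, hex, h3, h5, h6⟩
  have hsub : (treeOf F R).erase (P.redToEB e₀) ⊆ treeOf F R := Finset.erase_subset _ _
  have he₀ : e₀ ∈ F := mem_treeOf_red.mp he
  have hF' : P.redOf ((treeOf F R).erase (P.redToEB e₀)) = F.erase e₀ := by
    rw [redOf_erase_red, redOf_treeOf]
  have hFe : F.erase e₀ ⊆ F := Finset.erase_subset _ _
  obtain ⟨u₀, v₀, huv₀⟩ := sym2_exists (P.endsRed e₀)
  have hsingle : Reachable P.endsRed F u₀ v₀ := Reachable.single huv₀ he₀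
  have hmap : P.endsB (P.redToEB e₀) = s(P.liftW u₀, P.liftW v₀) := by
    rw [P.endsB_redToEB, huv₀, Sym2.map_pair_eq]
  have hpq : Reachable P.endsB ((treeOf F R).erase (P.redToEB e₀))
      (P.liftW u₀) (P.liftW v₀) := by
    rcases Sym2.eq_iff.mp (hmap.symm.trans huv) with ⟨h1, h2⟩ | ⟨h1, h2⟩
    · rw [← h1, ← h2] at hre; exact hre
    · rw [← h1, ← h2] at hre; exact hre.symm
  rcases link_coe_coe.mp (reach_link hpq) with hr | ⟨h0a, h0b⟩ | ⟨h1a, h1b⟩ | ⟨hH, hXu, hXv⟩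
  · rw [hF'] at hr
    exact hac e₀ he₀ u₀ v₀ huv₀ hr
  · obtain ⟨a₁, _, ha₁R, hra₁⟩ := aroot_rh0 hsub h0a
    obtain ⟨a₂, _, ha₂R, hra₂⟩ := aroot_rh0 hsub h0b
    rw [hF'] at hra₁ hra₂
    by_cases hq : a₁ = a₂
    · subst hq
      exact hac e₀ he₀ u₀ v₀ huv₀ (hra₁.trans hra₂.symm)
    · have hch : Reachable P.endsRed F (P.liftV (P.aVert a₁)) (P.liftV (P.aVert a₂)) :=
        ((hra₁.mono hFe).symm.trans hsingle).trans (hra₂.mono hFe)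
      exact bwd_not_both_inA hBfull ha₁R ha₂R (by simp [hq]) hch
        (inA_avert a₁) (inA_avert a₂)
  · obtain ⟨s₁, hs₁R, hs₁A, hrs₁, _⟩ := zroot_rh1 hbot hsub h1a
    obtain ⟨s₂, hs₂R, hs₂A, hrs₂, _⟩ := zroot_rh1 hbot hsub h1b
    rw [hF'] at hrs₁ hrs₂
    by_cases hq : s₁ = s₂
    · subst hq
      exact hac e₀ he₀ u₀ v₀ huv₀ (hrs₁.trans hrs₂.symm)
    · have hch : Reachable P.endsRed F s₁ s₂ :=
        ((hrs₁.mono hFe).symm.trans hsingle).trans (hrs₂.mono hFe)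
      exact bwd_not_both_notA hBfull hs₁R hs₂R hq hch hs₁A hs₂A
  · have hroot : ∀ w : P.Vred,
        rh0 ((treeOf F R).erase (P.redToEB e₀)) w ∨
          rh1 ((treeOf F R).erase (P.redToEB e₀)) w →
        ∃ r, r ∈ R ∧ Reachable P.endsRed (F.erase e₀) w r := by
      rintro w (h0 | h1)
      · obtain ⟨a, _, haR, hra⟩ := aroot_rh0 hsub h0
        rw [hF'] at hra
        exact ⟨_, haR, hra⟩
      · obtain ⟨s, hsR, _, hrs, _⟩ := zroot_rh1 hbot hsub h1
        rw [hF'] at hrs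
        exact ⟨s, hsR, hrs⟩
    obtain ⟨r₁, hr₁R, hru⟩ := hroot u₀ hXu
    obtain ⟨r₂, hr₂R, hrv⟩ := hroot v₀ hXv
    by_cases hq : r₁ = r₂
    · subst hq
      exact hac e₀ he₀ u₀ v₀ huv₀ (hru.trans hrv.symm)
    · have hpairF : Reachable P.endsRed F r₁ r₂ :=
        ((hru.mono hFe).symm.trans hsingle).trans (hrv.mono hFe)
      rcases hH with hH | ⟨w, hw0, hw1⟩
      · exact (mem_treeOf_e00.mp (hsub hH)) ⟨r₁, hr₁R, r₂, hr₂R, hq, hpairF⟩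
      · obtain ⟨a₃, s₃, _, ha₃R, hs₃R, hs₃A, _, hras₃⟩ := pair_of_hh hbot hsub hw0 hw1
        rw [hF'] at hras₃
        have hne₃ : P.liftV (P.aVert a₃) ≠ s₃ := avert_ne_of_not_inA hs₃A
        by_cases e1 : r₁ = P.liftV (P.aVert a₃)
        · by_cases e2 : r₂ = s₃
          · subst e1; subst e2
            exact hac e₀ he₀ u₀ v₀ huv₀ ((hru.trans hras₃).trans hrv.symm)
          · refine h3 _ ha₃R s₃ hs₃R r₂ hr₂R hne₃ ?_ (fun hc => e2 hc.symm)
              (hras₃.mono hFe) ?_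
            · rw [← e1]; exact hq
            · rw [← e1]; exact hpairF
        · by_cases e1' : r₁ = s₃
          · by_cases e2 : r₂ = P.liftV (P.aVert a₃)
            · subst e1'; subst e2
              exact hac e₀ he₀ u₀ v₀ huv₀ ((hru.trans hras₃.symm).trans hrv.symm)
            · refine h3 s₃ hs₃R _ ha₃R r₂ hr₂R (fun hc => hne₃ hc.symm)
                ?_ (fun hc => e2 hc.symm) ((hras₃.mono hFe).symm) ?_
              · rw [← e1']; exact hq
              · rw [← e1']; exact hpairF
          · have hr13 : Reachable P.endsRed F r₁ (P.liftV (P.aVert a₃)) :=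
              h5 r₁ hr₁R r₂ hr₂R _ ha₃R s₃ hs₃R hq hne₃ hpairF (hras₃.mono hFe)
            exact h3 r₁ hr₁R _ ha₃R s₃ hs₃R e1 e1' hne₃ hr13
              (hr13.trans (hras₃.mono hFe))

/-- Acyclicity of the tree associated to a birooted forest. -/
lemma bwd_acyclic : IsAcyclic P.endsB (treeOf F R) := by
  obtain ⟨hac, hbot, hex, h3, h5, h6⟩ := hB
  intro e he u v huv hre
  have hsub : (treeOf F R).erase e ⊆ treeOf F R := Finset.erase_subset _ _
  rcases e with u0 | (a | (b | (a | f)))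
  -- Case e = e00
  · cases u0
    have hnbi : ¬ HasBi F R := mem_treeOf_e00.mp he
    have hF' : P.redOf ((treeOf F R).erase P.e00) = F := redOf_erase_e00.trans redOf_treeOf
    have hpq : Reachable P.endsB ((treeOf F R).erase P.e00) (⊥ : P.W) (P.liftW ⊥) := by
      rcases Sym2.eq_iff.mp ((show P.endsB P.e00 = s((⊥ : P.W), P.liftW ⊥) from
        rfl).symm.trans huv) with ⟨h1, h2⟩ | ⟨h1, h2⟩
      · rw [← h1, ← h2] at hre; exact hre
      · rw [← h1, ← h2] at hre; exact hre.symm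
    rcases link_bot_coe.mp (reach_link hpq) with h0 | ⟨hH, h1⟩
    · obtain ⟨a, _, haR, hra⟩ := aroot_rh0 hsub h0
      rw [hF'] at hra
      exact hnbi ⟨⊥, hbot, _, haR, (liftV_ne_bot _).symm, hra⟩
    · rcases hH with hH | ⟨w, hw0, hw1⟩
      · exact (Finset.mem_erase.mp hH).1 rfl
      · obtain ⟨a, s, _, haR, hsR, hsA, _, hras⟩ := pair_of_hh hbot hsub hw0 hw1
        rw [hF'] at hras
        exact hnbi ⟨_, haR, s, hsR, avert_ne_of_not_inA hsA, hras⟩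
  -- Case e = eA a
  · have haR : P.liftV (P.aVert a) ∈ R := mem_treeOf_eA.mp he
    have hF' : P.redOf ((treeOf F R).erase (P.eA a)) = F := redOf_erase_eA.trans redOf_treeOf
    have hpq : Reachable P.endsB ((treeOf F R).erase (P.eA a)) (⊥ : P.W)
        (P.liftW (P.liftV (P.aVert a))) := by
      rcases Sym2.eq_iff.mp ((show P.endsB (P.eA a) =
          s((⊥ : P.W), P.liftW (P.liftV (P.aVert a))) from rfl).symm.trans huv) with
        ⟨h1, h2⟩ | ⟨h1, h2⟩
      · rw [← h1, ← h2] at hre; exact hre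
      · rw [← h1, ← h2] at hre; exact hre.symm
    rcases link_bot_coe.mp (reach_link hpq) with h0 | ⟨hH, h1⟩
    · obtain ⟨a₁, ha₁T, ha₁R, hra⟩ := aroot_rh0 hsub h0
      rw [hF'] at hra
      have hne : P.liftV (P.aVert a) ≠ P.liftV (P.aVert a₁) := by
        have : a₁ ≠ a := by
          have := (Finset.mem_erase.mp ha₁T).1
          simpa [eA] using this
        simp [this.symm]
      exact bwd_not_both_inA ⟨hac, hbot, hex, h3, h5, h6⟩ haR ha₁R hne hra
        (inA_avert a) (inA_avert a₁)
    · obtain ⟨s₁, hs₁R, hs₁A, hrs₁, _⟩ := zroot_rh1 hbot hsub h1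
      rw [hF'] at hrs₁
      have hne₁ : P.liftV (P.aVert a) ≠ s₁ := avert_ne_of_not_inA hs₁A
      rcases hH with hH | ⟨w, hw0, hw1⟩
      · exact (mem_treeOf_e00.mp (hsub hH)) ⟨_, haR, s₁, hs₁R, hne₁, hrs₁⟩
      · obtain ⟨a₂, s₂, ha₂T, ha₂R, hs₂R, hs₂A, _, hras₂⟩ := pair_of_hh hbot hsub hw0 hw1
        rw [hF'] at hras₂
        have ha₂ne : P.liftV (P.aVert a₂) ≠ P.liftV (P.aVert a) := by
          have : a₂ ≠ a := by
            have := (Finset.mem_erase.mp ha₂T).1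
            simpa [eA] using this
          simp [this]
        have hr13 : Reachable P.endsRed F (P.liftV (P.aVert a)) (P.liftV (P.aVert a₂)) :=
          h5 _ haR s₁ hs₁R _ ha₂R s₂ hs₂R hne₁ (avert_ne_of_not_inA hs₂A) hrs₁ hras₂
        exact h3 _ haR _ ha₂R s₁ hs₁R ha₂ne.symm hne₁ (avert_ne_of_not_inA hs₁A) hr13 hrs₁
  -- Case e = eB b
  · have hbR : P.liftV (P.bVert b) ∈ R := mem_treeOf_eB.mp he
    have hF' : P.redOf ((treeOf F R).erase (P.eB b)) = F := redOf_erase_eB.trans redOf_treeOf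
    have hbne : (⊥ : P.Vred) ≠ P.liftV (P.bVert b) := (liftV_ne_bot _).symm
    have hpq : Reachable P.endsB ((treeOf F R).erase (P.eB b)) (P.liftW ⊥)
        (P.liftW (P.liftV (P.bVert b))) := by
      rcases Sym2.eq_iff.mp ((show P.endsB (P.eB b) =
          s(P.liftW ⊥, P.liftW (P.liftV (P.bVert b))) from rfl).symm.trans huv) with
        ⟨h1, h2⟩ | ⟨h1, h2⟩
      · rw [← h1, ← h2] at hre; exact hre
      · rw [← h1, ← h2] at hre; exact hre.symm
    have hBfull : P.IsBirootedForest F R := ⟨hac, hbot, hex, h3, h5, h6⟩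
    -- helper: a 0̄-type root reached from bv b (with eB b removed) gives a contradiction
    have hzcase : rh1 ((treeOf F R).erase (P.eB b)) (P.liftV (P.bVert b)) → False := by
      intro h1
      obtain ⟨s₂, hs₂R, hs₂A, hrs₂, hstr⟩ := zroot_rh1 hbot hsub h1
      rw [hF'] at hrs₂
      have hne : P.liftV (P.bVert b) ≠ s₂ := by
        rcases hstr with rfl | ⟨b₂, rfl, hb₂⟩
        · exact liftV_ne_bot _
        · have : b₂ ≠ b := by
            have := (Finset.mem_erase.mp hb₂).1
            simpa [eB] using this
          simp [this.symm]
      exact bwd_not_both_notA hBfull hbR hs₂R hne hrs₂ (not_inA_bvert b) hs₂A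
    have hacase : rh0 ((treeOf F R).erase (P.eB b)) (P.liftV (P.bVert b)) →
        (rh0 ((treeOf F R).erase (P.eB b)) (⊥ : P.Vred) ∨
          HH ((treeOf F R).erase (P.eB b))) → False := by
      intro h0 hrest
      obtain ⟨a₂, ha₂T, ha₂R, hra₂⟩ := aroot_rh0 hsub h0
      rw [hF'] at hra₂
      have hne₂ : P.liftV (P.bVert b) ≠ P.liftV (P.aVert a₂) :=
        fun hc => not_inA_bvert b (hc ▸ inA_avert a₂)
      rcases hrest with h0b | hH
      · obtain ⟨a₁, _, ha₁R, hra₁⟩ := aroot_rh0 hsub h0b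
        rw [hF'] at hra₁
        have hr13 : Reachable P.endsRed F (⊥ : P.Vred) (P.liftV (P.bVert b)) :=
          h5 _ hbot _ ha₁R _ hbR _ ha₂R (liftV_ne_bot _).symm hne₂ hra₁ hra₂
        exact bwd_not_both_notA hBfull hbot hbR hbne hr13 not_inA_bot (not_inA_bvert b)
      · rcases hH with hH | ⟨w, hw0, hw1⟩
        · exact (mem_treeOf_e00.mp (hsub hH)) ⟨_, hbR, _, ha₂R, hne₂, hra₂⟩
        · obtain ⟨a₃, s₃, _, ha₃R, hs₃R, hs₃A, hstr₃, hras₃⟩ := pair_of_hh hbot hsub hw0 hw1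
          rw [hF'] at hras₃
          have hs₃ne : s₃ ≠ P.liftV (P.bVert b) := by
            rcases hstr₃ with rfl | ⟨b₃, rfl, hb₃⟩
            · exact (liftV_ne_bot _).symm
            · have : b₃ ≠ b := by
                have := (Finset.mem_erase.mp hb₃).1
                simpa [eB] using this
              simp [this]
          have hr13 : Reachable P.endsRed F (P.liftV (P.bVert b)) (P.liftV (P.aVert a₃)) :=
            h5 _ hbR _ ha₂R _ ha₃R s₃ hs₃R hne₂ (avert_ne_of_not_inA hs₃A) hra₂ hras₃
          exact h3 _ ha₃R s₃ hs₃R _ hbR (avert_ne_of_not_inA hs₃A)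
            (fun hc => not_inA_bvert b (hc.symm ▸ inA_avert a₃)) hs₃ne hras₃ hr13.symm
    rcases link_coe_coe.mp (reach_link hpq) with hr | ⟨h0a, h0b⟩ | ⟨h1a, h1b⟩ | ⟨hH, _, hXb⟩
    · rw [hF'] at hr
      exact bwd_not_both_notA hBfull hbot hbR hbne hr not_inA_bot (not_inA_bvert b)
    · exact hacase h0b (Or.inl h0a)
    · exact hzcase h1b
    · rcases hXb with h0 | h1
      · exact hacase h0 (Or.inr hH)
      · exact hzcase h1
  -- Case e = eS a (a reduced edge)
  · exact bwd_acyclic_red ⟨hac, hbot, hex, h3, h5, h6⟩ (e₀ := Sum.inl a) he huv hre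
  -- Case e = eG f
  · exact bwd_acyclic_red ⟨hac, hbot, hex, h3, h5, h6⟩ (e₀ := Sum.inr f) he huv hre

end Backward

end BiconedGraph
namespace BiconedGraph

variable {P : BiconedGraph} {F : Finset P.Ered} {R : Set P.Vred} {T : Finset P.EB}

lemma bwd_spanning (hB : P.IsBirootedForest F R) :
    IsSpanningTree P.endsB (treeOf F R) :=
  ⟨bwd_acyclic hB, bwd_conn hB⟩

lemma treeOf_redOf (hT : IsSpanningTree P.endsB T) :
    treeOf (P.redOf T) (rootsOf T) = T := by
  ext e
  rcases e with u0 | (a | (b | (a | f)))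
  · cases u0
    rw [show (Sum.inl () : P.EB) = P.e00 from rfl, mem_treeOf_e00]
    exact (fwd_e00_iff hT).symm
  · rw [show (Sum.inr (Sum.inl a) : P.EB) = P.eA a from rfl, mem_treeOf_eA]
    constructor
    · rintro (h | ⟨a', ha', hT'⟩ | ⟨b, hb, _⟩)
      · exact absurd h (liftV_ne_bot _)
      · rwa [show a = a' from by simpa using ha']
      · exact absurd (liftV_inj.mp hb) (avert_ne_bvert a b)
    · exact fun h => Or.inr (Or.inl ⟨a, rfl, h⟩)
  · rw [show (Sum.inr (Sum.inr (Sum.inl b)) : P.EB) = P.eB b from rfl, mem_treeOf_eB]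
    constructor
    · rintro (h | ⟨a, ha, _⟩ | ⟨b', hb', hT'⟩)
      · exact absurd h (liftV_ne_bot _)
      · exact absurd (liftV_inj.mp ha).symm (avert_ne_bvert a b)
      · rwa [show b = b' from by simpa using hb']
    · exact fun h => Or.inr (Or.inr ⟨b, rfl, h⟩)
  · rw [show (Sum.inr (Sum.inr (Sum.inr (Sum.inl a))) : P.EB) = P.redToEB (Sum.inl a) from rfl,
      mem_treeOf_red, mem_redOf]
  · rw [show (Sum.inr (Sum.inr (Sum.inr (Sum.inr f))) : P.EB) = P.redToEB (Sum.inr f) from rfl,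
      mem_treeOf_red, mem_redOf]

end BiconedGraph
/-- Lemma 3.4.  For any biconed graph `G^{A,B}` there is a
bijection between the set of spanning trees of `G^{A,B}` and the set of
birooted forests of `G^{A,B}_red`. -/
theorem spanningTrees_equiv_birootedForests (P : BiconedGraph) :
    Nonempty ({T : Finset P.EB // IsSpanningTree P.endsB T} ≃
      {FR : Finset P.Ered × Set P.Vred // P.IsBirootedForest FR.1 FR.2}) := by
  refine ⟨⟨fun T => ⟨(P.redOf T.1, BiconedGraph.rootsOf T.1), BiconedGraph.fwd_birooted T.2⟩,
    fun FR => ⟨BiconedGraph.treeOf FR.1.1 FR.1.2, BiconedGraph.bwd_spanning FR.2⟩, ?_, ?_⟩⟩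
  · rintro ⟨T, hT⟩
    exact Subtype.ext (BiconedGraph.treeOf_redOf hT)
  · rintro ⟨⟨F, R⟩, hFR⟩
    refine Subtype.ext (Prod.ext ?_ ?_)
    · exact BiconedGraph.redOf_treeOf
    · exact BiconedGraph.rootsOf_treeOf hFR.2.1

end

end BiconedPaper
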